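/- Let a, b, c > 0. For every Q ∈ S₀ with |Q| > 1 one has f*(Q) > f*(Q/|Q|). -/

import Mathlib

open Matrix

noncomputable section

abbrev M3 : Type := Matrix (Fin 3) (Fin 3) ℝ

def frob (Q : M3) : ℝ := Real.sqrt (∑ i, ∑ j, (Q i j) ^ 2)

/-- s_* = (b + √(b² + 24ac))/(4c). -/
def sstar (a b c : ℝ) : ℝ := (b + Real.sqrt (b ^ 2 + 24 * a * c)) / (4 * c)

def bstar (a b c : ℝ) : ℝ := Real.sqrt (2/3) * sstar a b c * b

def cstar (a b c : ℝ) : ℝ := (2/3) * (sstar a b c) ^ 2 * c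

def kstar (a b c : ℝ) : ℝ := a/2 + sstar a b c * b/9 - (sstar a b c) ^ 2 * c/6

/-- The rescaled Landau-de Gennes bulk potential
f*(Q) = k* − (a/2)tr Q² − (b*/3)tr Q³ + (c*/4)(tr Q²)². -/
def fstar (a b c : ℝ) (Q : M3) : ℝ :=
  kstar a b c - (a/2) * (Q * Q).trace - (bstar a b c / 3) * (Q * Q * Q).trace
    + (cstar a b c / 4) * ((Q * Q).trace) ^ 2

theorem trace_pow_eq' (Q : M3) (hA : Q.IsHermitian) (k : ℕ) :
    (Q ^ k).trace = ∑ i, hA.eigenvalues i ^ k := by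
  have hU : (star (hA.eigenvectorUnitary : M3)) * hA.eigenvectorUnitary = 1 :=
    mem_unitaryGroup_iff'.mp hA.eigenvectorUnitary.2
  have hU2 : (hA.eigenvectorUnitary : M3) * star (hA.eigenvectorUnitary : M3) = 1 :=
    mem_unitaryGroup_iff.mp hA.eigenvectorUnitary.2
  have hsp := hA.spectral_theorem
  set U : M3 := (hA.eigenvectorUnitary : M3)
  set D : M3 := Matrix.diagonal (RCLike.ofReal ∘ hA.eigenvalues)
  have hpow : Q ^ k = U * D ^ k * star U := by
    induction k with
    | zero => simp [← hsp, hU2]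
    | succ n ih =>
      rw [pow_succ, ih, pow_succ, hsp, Unitary.conjStarAlgAut_apply]
      simp only [Matrix.mul_assoc]
      rw [← Matrix.mul_assoc (star U) U, hU, Matrix.one_mul]
  rw [hpow, Matrix.trace_mul_cycle, hU, Matrix.one_mul,
    Matrix.diagonal_pow, Matrix.trace_diagonal]
  simp

theorem cube_sum_sq_le (x y z : ℝ) (h : x + y + z = 0) :
    6 * (x^3 + y^3 + z^3)^2 ≤ (x^2 + y^2 + z^2)^3 := by
  have hz : z = -(x + y) := by linarith
  subst hz
  nlinarith [sq_nonneg ((x - y) * (2*x + y) * (x + 2*y))]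


theorem sstar_facts (a b c : ℝ) (ha : 0 < a) (hb : 0 < b) (hc : 0 < c) :
    0 < sstar a b c ∧ b ≤ 2 * c * sstar a b c ∧
      2 * c * (sstar a b c) ^ 2 = b * (sstar a b c) + 3 * a := by
  have hw0 : (0:ℝ) ≤ b ^ 2 + 24 * a * c := by positivity
  have hw : Real.sqrt (b ^ 2 + 24 * a * c) ^ 2 = b ^ 2 + 24 * a * c := Real.sq_sqrt hw0
  have hwb : b ≤ Real.sqrt (b ^ 2 + 24 * a * c) := by
    nlinarith [Real.sqrt_nonneg (b ^ 2 + 24 * a * c)]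
  have hs4 : 4 * c * sstar a b c = b + Real.sqrt (b ^ 2 + 24 * a * c) := by
    rw [sstar]; field_simp
  refine ⟨by rw [sstar]; positivity, by nlinarith, by nlinarith⟩

theorem final_poly (a b c s t : ℝ) (hb : 0 < b) (hs0 : 0 < s)
    (hs1 : b ≤ 2 * c * s) (hs2 : 2 * c * s ^ 2 = b * s + 3 * a) (ht : 1 < t) :
    a/2 * (t^2 - 1) + s*b/9 * (t^3 - 1) < (2/3 * s^2 * c)/4 * (t^4 - 1) := by
  have h1 : 0 ≤ (2*c*s - b) * (s * ((t-1)*(t+1))^2) :=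
    mul_nonneg (by linarith) (by positivity)
  have h2 : 0 < b * s * ((t-1)^2 * (3*t^2 + 2*t + 1)) :=
    mul_pos (mul_pos hb hs0) (mul_pos (pow_pos (by linarith) 2) (by nlinarith))
  nlinarith [h1, h2]

/-- For every Q ∈ S₀ with |Q| > 1 one has f*(Q) > f*(Q/|Q|). -/
theorem stmt5 (a b c : ℝ) (ha : 0 < a) (hb : 0 < b) (hc : 0 < c)
    (Q : M3) (hsymm : Qᵀ = Q) (htr : Q.trace = 0) (hQ : 1 < frob Q) :
    fstar a b c ((frob Q)⁻¹ • Q) < fstar a b c Q := by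
  have hH : Q.IsHermitian := by
    rwa [Matrix.IsHermitian, Matrix.conjTranspose_eq_transpose_of_trivial]
  set s : ℝ := sstar a b c with hs_def
  set t : ℝ := frob Q with ht_def
  set T2 : ℝ := (Q * Q).trace with hT2_def
  set T3 : ℝ := (Q * Q * Q).trace with hT3_def
  have ht0 : (0:ℝ) < t := lt_trans one_pos hQ
  set u : ℝ := t⁻¹ with hu_def
  have hut : t * u = 1 := mul_inv_cancel₀ ht0.ne'
  have hu0 : 0 < u := inv_pos.mpr ht0
  have hu1 : u < 1 := by
    rw [hu_def, inv_lt_one_iff₀]; right; exact hQ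
  -- eigenvalue identities
  have e1 : Q.trace = ∑ i, hH.eigenvalues i := by
    have := trace_pow_eq' Q hH 1; simpa using this
  have e2 : T2 = ∑ i, hH.eigenvalues i ^ 2 := by
    have := trace_pow_eq' Q hH 2; rw [pow_two] at this; exact this
  have e3 : T3 = ∑ i, hH.eigenvalues i ^ 3 := by
    have := trace_pow_eq' Q hH 3
    rw [show Q ^ 3 = Q * Q * Q by rw [pow_succ, pow_two]] at this; exact this
  have hsum0 : hH.eigenvalues 0 + hH.eigenvalues 1 + hH.eigenvalues 2 = 0 := by
    rw [e1, Fin.sum_univ_three] at htr; exact htr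
  have h6 : 6 * T3 ^ 2 ≤ T2 ^ 3 := by
    rw [e2, e3, Fin.sum_univ_three, Fin.sum_univ_three]
    exact cube_sum_sq_le _ _ _ hsum0
  -- frob² = tr Q²
  have ht2 : t ^ 2 = T2 := by
    rw [ht_def, frob, Real.sq_sqrt (by positivity), hT2_def]
    simp only [Matrix.trace, Matrix.diag, Matrix.mul_apply]
    congr 1; ext i; congr 1; ext j
    have : Q j i = Q i j := by conv_lhs => rw [← hsymm, Matrix.transpose_apply]
    rw [this]; ring
  clear e1 e2 e3 hsum0 htr
  -- sqrt 6 facts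
  set r : ℝ := Real.sqrt 6 with hr_def
  have hr2 : r ^ 2 = 6 := Real.sq_sqrt (by norm_num)
  have hr0 : (0:ℝ) < r := Real.sqrt_pos.mpr (by norm_num)
  have hbstar : bstar a b c = 2 * s * b / r := by
    rw [bstar, show Real.sqrt (2/3) = 2 / Real.sqrt 6 by
      rw [show (2:ℝ)/3 = 4/6 by norm_num, Real.sqrt_div (by norm_num),
        show (4:ℝ) = 2^2 by norm_num, Real.sqrt_sq (by norm_num)], ← hs_def, ← hr_def]
    ring
  -- sstar facts
  obtain ⟨hs0, hs1, hs2⟩ := sstar_facts a b c ha hb hc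
  rw [← hs_def] at hs0 hs1 hs2
  -- bound on T3
  have hT3r : T3 * r ≤ t ^ 3 := by
    have h6' : (T3 * r) ^ 2 ≤ (t ^ 3) ^ 2 := by
      calc (T3 * r) ^ 2 = 6 * T3 ^ 2 := by rw [mul_pow, hr2]; ring
        _ ≤ T2 ^ 3 := h6
        _ = (t ^ 3) ^ 2 := by rw [← ht2]; ring
    nlinarith [h6', pow_pos ht0 3, sq_nonneg (T3 * r - t ^ 3), sq_nonneg (T3 * r + t ^ 3)]
  -- key middle bound
  have ht3u : t ^ 3 * u ^ 3 = 1 := by rw [← mul_pow, hut]; norm_num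
  have hkey : bstar a b c / 3 * (T3 - u ^ 3 * T3) ≤ s * b / 9 * (t ^ 3 - 1) := by
    have e1u : 0 ≤ 1 - u ^ 3 := by
      have := pow_lt_one₀ hu0.le hu1 (three_ne_zero)
      linarith
    have emul : T3 * r * (1 - u ^ 3) ≤ t ^ 3 * (1 - u ^ 3) :=
      mul_le_mul_of_nonneg_right hT3r e1u
    have lhs_eq : bstar a b c / 3 * (T3 - u ^ 3 * T3)
        = (2 * s * b) * (T3 * r * (1 - u ^ 3)) / (3 * r ^ 2) := by
      rw [hbstar]; field_simp
    rw [lhs_eq, hr2]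
    calc (2 * s * b) * (T3 * r * (1 - u ^ 3)) / (3 * 6)
        = (s * b / 9) * (T3 * r * (1 - u ^ 3)) := by ring
      _ ≤ (s * b / 9) * (t ^ 3 * (1 - u ^ 3)) :=
          mul_le_mul_of_nonneg_left emul (by positivity)
      _ = s * b / 9 * (t ^ 3 - 1) := by linear_combination (-(s * b) / 9) * ht3u
  -- final polynomial inequality
  have hfinal : a/2 * (t^2 - 1) + s*b/9 * (t^3 - 1) < (2/3 * s^2 * c)/4 * (t^4 - 1) :=
    final_poly a b c s t hb hs0 hs1 hs2 hQ
  -- scaled traces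
  have sc2 : ((u • Q) * (u • Q)).trace = u ^ 2 * T2 := by
    simp only [Matrix.smul_mul, Matrix.mul_smul, smul_smul, Matrix.trace_smul, smul_eq_mul,
      ← hT2_def]
    ring
  have sc3 : ((u • Q) * (u • Q) * (u • Q)).trace = u ^ 3 * T3 := by
    simp only [Matrix.smul_mul, Matrix.mul_smul, smul_smul, Matrix.trace_smul, smul_eq_mul,
      ← hT3_def]
    ring
  have hu2T2 : u ^ 2 * T2 = 1 := by
    rw [← ht2, ← mul_pow, mul_comm u t, hut]; norm_num
  -- put it together
  rw [fstar, fstar, sc2, sc3, hu2T2, ← hT2_def, ← hT3_def, ← ht2]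
  have hcstar : cstar a b c = 2/3 * s^2 * c := rfl
  rw [hcstar]
  clear_value s t T2 T3 u r
  clear hH hsymm h6 hT3r sc2 sc3 hbstar hr2 hr0 ht2 hu2T2 ht3u
  nlinarith [hkey, hfinal]
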